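/- Potential step inequality for user transactions: assume r(x0) = p_x/p_y. If a transaction Sell(X,q) (q ≥ 0) is executed at a state (x̄, F_y(x̄)) with x̄ ≤ x0, producing the new reserve x̂ = x̄ + (1−f)q, then φ(x̂) − φ(x̄) ≤ AP(s0, Sell(X,q)), where s0 = (x0, F_y(x0)). -/

import Mathlib

/-- The potential function `φ`:
`φ(x) = (x − R_x)·p_x + ((F_y(x) − F_y(R_x))/(1−f))·p_y` if `x > R_x`;
`φ(x) = ((x − L_x)/(1−f))·p_x + (F_y(x) − F_y(L_x))·p_y` if `x < L_x`;
`φ(x) = 0` if `x ∈ [L_x, R_x]`. -/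
noncomputable def phi (Fy : ℝ → ℝ) (f px py Lx Rx : ℝ) (x : ℝ) : ℝ :=
  if Rx < x then (x - Rx) * px + ((Fy x - Fy Rx) / (1 - f)) * py
  else if x < Lx then ((x - Lx) / (1 - f)) * px + (Fy x - Fy Lx) * py
  else 0


open Set in
lemma gmono (Fy : ℝ → ℝ) (f px py Rx : ℝ) (hf1 : f < 1) (hpy : 0 < py)
    (hFy_diff : ∀ x ∈ Ioi (0:ℝ), DifferentiableAt ℝ Fy x)
    (hr_anti : StrictAntiOn (fun x => -deriv Fy x) (Ioi 0))
    (hRx_pos : 0 < Rx) (hRx : -deriv Fy Rx = (1 - f) * (px / py)) :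
    MonotoneOn (fun x => (x - Rx) * px + ((Fy x - Fy Rx) / (1 - f)) * py) (Ici Rx) := by
  have h1f : (0:ℝ) < 1 - f := by linarith
  have hsub : Ici Rx ⊆ Ioi (0:ℝ) := fun x hx => lt_of_lt_of_le hRx_pos hx
  have hRx' : (-deriv Fy Rx) * py = (1 - f) * px := by
    rw [hRx]; field_simp
  have hder : ∀ x : ℝ, 0 < x →
      HasDerivAt (fun x => (x - Rx) * px + ((Fy x - Fy Rx) / (1 - f)) * py)
        (px + deriv Fy x / (1 - f) * py) x := by
    intro x hx
    have h1 : HasDerivAt (fun x : ℝ => x - Rx) 1 x := (hasDerivAt_id x).sub_const Rx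
    have h2 := (hFy_diff x hx).hasDerivAt
    have := (h1.mul_const px).add (((h2.sub_const (Fy Rx)).div_const (1-f)).mul_const py)
    rw [one_mul] at this
    exact this
  have hcont : ContinuousOn (fun x => (x - Rx) * px + ((Fy x - Fy Rx) / (1 - f)) * py) (Ici Rx) :=
    fun x hx => ((hder x (hsub hx)).differentiableAt.continuousAt).continuousWithinAt
  apply (strictMonoOn_of_deriv_pos (convex_Ici Rx) hcont ?_).monotoneOn
  intro x hx
  rw [interior_Ici] at hx
  have hx0 : (0:ℝ) < x := lt_trans hRx_pos hx
  rw [(hder x hx0).deriv]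
  have hlt : -deriv Fy x < -deriv Fy Rx := hr_anti (mem_Ioi.2 hRx_pos) (mem_Ioi.2 hx0) hx
  have hlt' : (-deriv Fy x) * py < (1 - f) * px := by
    calc (-deriv Fy x) * py < (-deriv Fy Rx) * py := by
          exact mul_lt_mul_of_pos_right hlt hpy
      _ = (1 - f) * px := hRx'
  have heq : px + deriv Fy x / (1 - f) * py = (px * (1 - f) + deriv Fy x * py) / (1 - f) := by
    field_simp
  rw [heq]
  apply div_pos _ h1f
  nlinarith

open Set in
lemma hanti (Fy : ℝ → ℝ) (f px py Lx : ℝ) (hf1 : f < 1) (hpy : 0 < py)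
    (hFy_diff : ∀ x ∈ Ioi (0:ℝ), DifferentiableAt ℝ Fy x)
    (hr_anti : StrictAntiOn (fun x => -deriv Fy x) (Ioi 0))
    (hLx_pos : 0 < Lx) (hLx : -deriv Fy Lx = (1 / (1 - f)) * (px / py)) :
    AntitoneOn (fun x => ((x - Lx) / (1 - f)) * px + (Fy x - Fy Lx) * py) (Ioc 0 Lx) := by
  have h1f : (0:ℝ) < 1 - f := by linarith
  have hLx' : (-deriv Fy Lx) * py = px / (1 - f) := by
    rw [hLx]; field_simp
  have hder : ∀ x : ℝ, 0 < x →
      HasDerivAt (fun x => ((x - Lx) / (1 - f)) * px + (Fy x - Fy Lx) * py)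
        (1 / (1 - f) * px + deriv Fy x * py) x := by
    intro x hx
    have h1 : HasDerivAt (fun x : ℝ => (x - Lx) / (1 - f)) (1 / (1 - f)) x := by
      have := ((hasDerivAt_id x).sub_const Lx).div_const (1 - f)
      simpa using this
    have h2 := (hFy_diff x hx).hasDerivAt
    exact (h1.mul_const px).add ((h2.sub_const (Fy Lx)).mul_const py)
  have hcont : ContinuousOn (fun x => ((x - Lx) / (1 - f)) * px + (Fy x - Fy Lx) * py) (Ioc 0 Lx) :=
    fun x hx => ((hder x hx.1).differentiableAt.continuousAt).continuousWithinAt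
  apply (strictAntiOn_of_deriv_neg (convex_Ioc 0 Lx) hcont ?_).antitoneOn
  intro x hx
  rw [interior_Ioc] at hx
  rw [(hder x hx.1).deriv]
  have hlt : -deriv Fy Lx < -deriv Fy x := hr_anti (mem_Ioi.2 hx.1) (mem_Ioi.2 hLx_pos) hx.2
  have hlt' : px / (1 - f) < (-deriv Fy x) * py := by
    calc px / (1 - f) = (-deriv Fy Lx) * py := hLx'.symm
      _ < (-deriv Fy x) * py := mul_lt_mul_of_pos_right hlt hpy
  have heq : 1 / (1 - f) * px = px / (1 - f) := by ring
  linarith [heq]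

/-- **potential step inequality for user transactions.**
Assume `r(x0) = p_x/p_y`. If a transaction `Sell(X,q)` (`q ≥ 0`) is executed at a state
`(x̄, F_y(x̄))` with `x̄ ≤ x0`, producing the new reserve `x̂ = x̄ + (1−f)q`, then
`φ(x̂) − φ(x̄) ≤ AP(s0, Sell(X,q))`, where `s0 = (x0, F_y(x0))` and, with
`x′ = max (x0+(1−f)q) R_x`, `AP(s0, Sell(X,q)) = (x′ − R_x)·p_x − ((F_y(R_x) − F_y(x′))/(1−f))·p_y`.

The CFMM is given by a differentiable, strictly decreasing reserve curve `Fy` on `(0,∞)`,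
with marginal exchange rate `r x = −Fy′ x` positive and strictly decreasing there;
`p_x, p_y > 0`, `f ∈ [0,1)`, `L_x` satisfies `r L_x = (1/(1−f))·(p_x/p_y)` and `R_x`
satisfies `r R_x = (1−f)·(p_x/p_y)`. -/
theorem phi_step_user
    (Fy : ℝ → ℝ) (f px py Lx Rx x0 xbar q : ℝ)
    (hf0 : 0 ≤ f) (hf1 : f < 1)
    (hpx : 0 < px) (hpy : 0 < py)
    (hFy_diff : ∀ x ∈ Set.Ioi (0 : ℝ), DifferentiableAt ℝ Fy x)
    (hFy_anti : StrictAntiOn Fy (Set.Ioi 0))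
    (hr_pos : ∀ x ∈ Set.Ioi (0 : ℝ), 0 < -deriv Fy x)
    (hr_anti : StrictAntiOn (fun x => -deriv Fy x) (Set.Ioi 0))
    (hLx_pos : 0 < Lx) (hLx : -deriv Fy Lx = (1 / (1 - f)) * (px / py))
    (hRx_pos : 0 < Rx) (hRx : -deriv Fy Rx = (1 - f) * (px / py))
    (hx0_pos : 0 < x0) (hx0 : -deriv Fy x0 = px / py)
    (hxbar_pos : 0 < xbar) (hxbar : xbar ≤ x0)
    (hq : 0 ≤ q) :
    phi Fy f px py Lx Rx (xbar + (1 - f) * q) - phi Fy f px py Lx Rx xbar ≤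
      (max (x0 + (1 - f) * q) Rx - Rx) * px -
        ((Fy Rx - Fy (max (x0 + (1 - f) * q) Rx)) / (1 - f)) * py := by
  have h1f : (0:ℝ) < 1 - f := by linarith
  set g : ℝ → ℝ := fun x => (x - Rx) * px + ((Fy x - Fy Rx) / (1 - f)) * py with hg
  set h : ℝ → ℝ := fun x => ((x - Lx) / (1 - f)) * px + (Fy x - Fy Lx) * py with hh
  have hgmono : MonotoneOn g (Set.Ici Rx) :=
    gmono Fy f px py Rx hf1 hpy hFy_diff hr_anti hRx_pos hRx
  have hhanti : AntitoneOn h (Set.Ioc 0 Lx) :=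
    hanti Fy f px py Lx hf1 hpy hFy_diff hr_anti hLx_pos hLx
  have hgRx : g Rx = 0 := by simp [hg]
  have hhLx : h Lx = 0 := by simp [hh]
  have hLR : Lx ≤ Rx := by
    by_contra hc
    push_neg at hc
    have : -deriv Fy Lx < -deriv Fy Rx := hr_anti (Set.mem_Ioi.2 hRx_pos) (Set.mem_Ioi.2 hLx_pos) hc
    rw [hLx, hRx] at this
    have hc2 : (0:ℝ) < px / py := div_pos hpx hpy
    have h1 : (1 - f) * (px / py) ≤ px / py := by nlinarith
    have h2 : px / py ≤ 1 / (1 - f) * (px / py) := by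
      rw [div_mul_eq_mul_div, one_mul, le_div_iff₀ h1f]
      nlinarith
    linarith
  set xhat := xbar + (1 - f) * q with hxhat
  set x' := max (x0 + (1 - f) * q) Rx with hx'
  have hxhat_pos : 0 < xhat := by positivity
  have hxbar_le : xbar ≤ xhat := by nlinarith
  have hxhat_le : xhat ≤ x' := le_trans (by linarith) (le_max_left _ _)
  have hRx_le : Rx ≤ x' := le_max_right _ _
  have hrhs : (x' - Rx) * px - ((Fy Rx - Fy x') / (1 - f)) * py = g x' := by
    simp only [hg]; ring
  have hrhs_nonneg : 0 ≤ g x' := by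
    rw [← hgRx]
    exact hgmono Set.self_mem_Ici hRx_le hRx_le
  have hphi_bar_nonneg : 0 ≤ phi Fy f px py Lx Rx xbar := by
    unfold phi
    split_ifs with h1 h2
    · rw [← hgRx]; exact hgmono Set.self_mem_Ici (le_of_lt h1) (le_of_lt h1)
    · rw [← hhLx]
      exact hhanti ⟨hxbar_pos, le_of_lt h2⟩ ⟨hLx_pos, le_refl _⟩ (le_of_lt h2)
    · exact le_refl 0
  rw [hrhs]
  by_cases hA : Rx < xhat
  · have hphat : phi Fy f px py Lx Rx xhat = g xhat := by
      unfold phi; rw [if_pos hA]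
    have hle : g xhat ≤ g x' := hgmono (le_of_lt hA) (le_trans (le_of_lt hA) hxhat_le) hxhat_le
    linarith
  by_cases hC : xhat < Lx
  · have hxbarLx : xbar < Lx := lt_of_le_of_lt hxbar_le hC
    have hphat : phi Fy f px py Lx Rx xhat = h xhat := by
      unfold phi
      rw [if_neg hA, if_pos hC]
    have hpbar : phi Fy f px py Lx Rx xbar = h xbar := by
      unfold phi
      rw [if_neg (by push_neg; linarith), if_pos hxbarLx]
    have hle : h xhat ≤ h xbar :=
      hhanti ⟨hxbar_pos, le_of_lt hxbarLx⟩ ⟨hxhat_pos, le_of_lt hC⟩ hxbar_le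
    linarith
  · have hphat : phi Fy f px py Lx Rx xhat = 0 := by
      unfold phi
      rw [if_neg hA, if_neg hC]
    linarith
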